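/- For each integer k ≥ 2, the supremum of L(k,p) over p ∈ (0, 1-(1/3)^(1/3)] equals the supremum of L(k,p) over p ∈ (0,1). -/

import Mathlib

open Real Set Filter

/-- Expected number of tests per person in the Dorfman two-stage procedure
with group size `k` and prevalence `p`: `E 1 p = 1` and
`E k p = 1 - (1-p)^k + 1/k` for `k ≥ 2`. -/
noncomputable def E (k : ℕ) (p : ℝ) : ℝ :=
  if k = 1 then 1 else 1 - (1 - p) ^ k + 1 / k

/-- Optimal expected number of tests per person: infimum over group sizes `k ≥ 1`. -/
noncomputable def Estar (p : ℝ) : ℝ := ⨅ k : ℕ+, E k p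

/-- Loss of using group size `k` at prevalence `p`. -/
noncomputable def L (k : ℕ) (p : ℝ) : ℝ := E k p - Estar p
lemma cube_le_three_pow (j : ℕ) : j ^ 3 ≤ 3 ^ j := by
  rcases le_or_gt j 2 with h | h
  · interval_cases j <;> decide
  · induction j, h using Nat.le_induction with
    | base => decide
    | succ n hn ih =>
      have : 3 ^ (n + 1) = 3 * 3 ^ n := by ring
      rw [this]
      have key : (n+1)^3 ≤ 3 * n^3 := by
        have hn' : (3:ℤ) ≤ n := by exact_mod_cast hn
        zify
        nlinarith [hn', sq_nonneg ((n:ℤ) - 3), mul_nonneg (mul_nonneg (sub_nonneg.2 hn') (sub_nonneg.2 hn')) (sub_nonneg.2 hn')]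
      calc (n+1)^3 ≤ 3 * n^3 := key
      _ ≤ 3 * 3^n := by omega

lemma tpow_le (j : ℕ) (hj : 1 ≤ j) :
    (((1:ℝ)/3) ^ ((1:ℝ)/3)) ^ j ≤ 1 / j := by
  set t : ℝ := ((1:ℝ)/3) ^ ((1:ℝ)/3) with ht
  have ht0 : 0 < t := Real.rpow_pos_of_pos (by norm_num) _
  have ht3 : t ^ (3:ℕ) = 1/3 := by
    rw [ht, ← Real.rpow_natCast (((1:ℝ)/3) ^ ((1:ℝ)/3)) 3, ← Real.rpow_mul (by norm_num)]
    norm_num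
  have hj0 : (0:ℝ) < j := by exact_mod_cast hj
  refine le_of_pow_le_pow_left₀ (n := 3) (by norm_num) (by positivity) ?_
  have h1 : (t ^ j) ^ (3:ℕ) = ((1:ℝ)/3) ^ j := by
    rw [← pow_mul, mul_comm, pow_mul, ht3]
  rw [h1]
  have h2 : ((1:ℝ)/j) ^ (3:ℕ) = 1 / (j:ℝ)^3 := by
    rw [div_pow]; norm_num
  rw [h2, one_div_pow]
  rw [div_le_div_iff₀ (by positivity) (by positivity), one_mul, one_mul]
  calc ((j:ℝ))^3 ≤ (3:ℝ)^j := by exact_mod_cast cube_le_three_pow j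
  _ = ((3:ℝ)^j) := rfl

lemma E_nonneg (j : ℕ) (p : ℝ) (hp0 : 0 ≤ p) (hp1 : p ≤ 1) : 0 ≤ E j p := by
  unfold E
  split
  · norm_num
  · rename_i hj1
    have h1 : (1 - p) ^ j ≤ 1 := pow_le_one₀ (by linarith) (by linarith)
    have : (0:ℝ) ≤ 1 / j := by positivity
    linarith

lemma Estar_bddBelow (p : ℝ) (hp0 : 0 ≤ p) (hp1 : p ≤ 1) :
    BddBelow (Set.range fun j : ℕ+ => E (j:ℕ) p) := by
  exact ⟨0, by rintro x ⟨j, rfl⟩; exact E_nonneg j p hp0 hp1⟩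

lemma Estar_nonneg (p : ℝ) (hp0 : 0 ≤ p) (hp1 : p ≤ 1) : 0 ≤ Estar p :=
  le_ciInf fun j => E_nonneg j p hp0 hp1

lemma Estar_le (p : ℝ) (hp0 : 0 ≤ p) (hp1 : p ≤ 1) (j : ℕ+) : Estar p ≤ E (j:ℕ) p :=
  ciInf_le (Estar_bddBelow p hp0 hp1) j

lemma one_le_Estar (p : ℝ) (hc : 1 - ((1:ℝ)/3) ^ ((1:ℝ)/3) ≤ p) (hp1 : p ≤ 1) :
    1 ≤ Estar p := by
  refine le_ciInf fun j => ?_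
  unfold E
  split
  · exact le_rfl
  · rename_i hj1
    have hj : 1 ≤ (j:ℕ) := j.one_le
    have ht0 : (0:ℝ) < ((1:ℝ)/3) ^ ((1:ℝ)/3) := Real.rpow_pos_of_pos (by norm_num) _
    have h1 : (1 - p) ^ (j:ℕ) ≤ (((1:ℝ)/3) ^ ((1:ℝ)/3)) ^ (j:ℕ) :=
      pow_le_pow_left₀ (by linarith) (by linarith) _
    have h2 := tpow_le (j:ℕ) hj
    have : (1 - p) ^ (j:ℕ) ≤ 1 / (j:ℕ) := le_trans h1 h2
    linarith

theorem sup_loss_restriction (k : ℕ) (hk : 2 ≤ k) :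
    sSup (L k '' Set.Ioc (0:ℝ) (1 - ((1:ℝ)/3) ^ ((1:ℝ)/3))) =
      sSup (L k '' Set.Ioo (0:ℝ) 1) := by
  set c : ℝ := 1 - ((1:ℝ)/3) ^ ((1:ℝ)/3) with hc
  have ht0 : (0:ℝ) < ((1:ℝ)/3) ^ ((1:ℝ)/3) := Real.rpow_pos_of_pos (by norm_num) _
  have ht1 : ((1:ℝ)/3) ^ ((1:ℝ)/3) < 1 :=
    Real.rpow_lt_one (by norm_num) (by norm_num) (by norm_num)
  have hc0 : 0 < c := by simp [hc]; linarith
  have hc1 : c < 1 := by simp [hc]; linarith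
  have hsub : Set.Ioc (0:ℝ) c ⊆ Set.Ioo (0:ℝ) 1 := fun x hx => ⟨hx.1, lt_of_le_of_lt hx.2 hc1⟩
  have hk1 : k ≠ 1 := by omega
  have hkpos : (0:ℝ) < k := by positivity
  -- L k p ≤ 1 + 1/k on (0,1)
  have hLle : ∀ p ∈ Set.Ioo (0:ℝ) 1, L k p ≤ 1 + 1/k := by
    intro p hp
    have h0 : 0 ≤ Estar p := Estar_nonneg p hp.1.le hp.2.le
    have : E k p ≤ 1 + 1/k := by
      unfold E; rw [if_neg hk1]
      have : (0:ℝ) ≤ (1-p)^k := pow_nonneg (by linarith [hp.2]) k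
      linarith
    unfold L; linarith
  have hBdd : BddAbove (L k '' Set.Ioo (0:ℝ) 1) := by
    refine ⟨1 + 1/k, ?_⟩
    rintro x ⟨p, hp, rfl⟩
    exact hLle p hp
  have hBddA : BddAbove (L k '' Set.Ioc (0:ℝ) c) :=
    hBdd.mono (Set.image_mono hsub)
  have hAne : (L k '' Set.Ioc (0:ℝ) c).Nonempty := ⟨L k c, ⟨c, ⟨hc0, le_refl c⟩, rfl⟩⟩
  -- 1/k ≤ sSup A
  have hone : 1/(k:ℝ) ≤ sSup (L k '' Set.Ioc (0:ℝ) c) := by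
    refine le_of_forall_pos_le_add fun ε hε => ?_
    obtain ⟨n, hn⟩ := exists_nat_one_div_lt (show (0:ℝ) < ε/2 by linarith)
    set j : ℕ := n + 2 with hjdef
    have hjpos : (0:ℝ) < j := by positivity
    set p : ℝ := min c (ε/(2*j)) with hpdef
    have hp0 : 0 < p := lt_min hc0 (by positivity)
    have hpc : p ≤ c := min_le_left _ _
    have hp1 : p ≤ 1 := hpc.trans hc1.le
    -- Estar p ≤ j*p + 1/j
    have hjne : j ≠ 1 := by omega
    have hEj : E j p ≤ j*p + 1/j := by
      unfold E
      rw [if_neg hjne]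
      have hber : 1 - (j:ℝ)*p ≤ (1-p)^j := by
        have h := one_add_mul_le_pow (a := -p) (by linarith) j
        rw [mul_neg, ← sub_eq_add_neg, ← sub_eq_add_neg] at h
        exact h
      linarith
    have hEstar : Estar p ≤ j*p + 1/j := by
      exact le_trans (Estar_le p hp0.le hp1 ⟨j, by omega⟩) hEj
    have hjp : (j:ℝ)*p ≤ ε/2 := by
      have : p ≤ ε/(2*j) := min_le_right _ _
      calc (j:ℝ)*p ≤ (j:ℝ)*(ε/(2*j)) := by nlinarith
      _ = ε/2 := by field_simp
    have hinv : 1/(j:ℝ) ≤ ε/2 := by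
      have h1 : (1:ℝ)/(n+2) ≤ 1/(n+1) := by
        apply one_div_le_one_div_of_le (by positivity) (by linarith)
      rw [hjdef]; push_cast; push_cast at h1; linarith [hn]
    have hLlb : 1/(k:ℝ) - ε ≤ L k p := by
      unfold L E
      rw [if_neg hk1]
      have : (1-p)^k ≤ 1 := pow_le_one₀ (by linarith) (by linarith)
      linarith
    have : L k p ≤ sSup (L k '' Set.Ioc (0:ℝ) c) :=
      le_csSup hBddA ⟨p, ⟨hp0, hpc⟩, rfl⟩
    linarith
  apply le_antisymm
  · exact csSup_le_csSup hBdd hAne (Set.image_mono hsub)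
  · refine csSup_le ⟨L k (1/2), ⟨1/2, ⟨by norm_num, by norm_num⟩, rfl⟩⟩ ?_
    rintro x ⟨p, hp, rfl⟩
    rcases le_or_gt p c with h | h
    · exact le_csSup hBddA ⟨p, ⟨hp.1, h⟩, rfl⟩
    · have h1 : 1 ≤ Estar p := one_le_Estar p (by rw [← hc]; linarith) hp.2.le
      have h2 : L k p ≤ 1/k := by
        unfold L E
        rw [if_neg hk1]
        have : (0:ℝ) ≤ (1-p)^k := pow_nonneg (by linarith [hp.2]) k
        linarith
      linarith
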